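/- For every n ≥ 0 one has |z₂,ₙ − z₂| = ρ·(1 − λ₁,ₙ) < ρ₂ and |z₁,ₙ − z₁| = ρ·(1 − λ₂,ₙ) < ρ₁; that is, z₁,ₙ lies in the open disk of center z₁ and radius ρ₁ and z₂,ₙ lies in the open disk of center z₂ and radius ρ₂. -/

import Mathlib

theorem z_seq_in_disks
    (z₁ z₂ : ℂ) (hz : z₁ ≠ z₂) (ρ ρ₁ ρ₂ : ℝ)
    (hρ : ρ = ‖z₁ - z₂‖)
    (hρ₁ : 0 < ρ₁) (hρ₂ : 0 < ρ₂) (hsum : ρ₁ + ρ₂ < ρ)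
    (Λ₁ Λ₂ Λ : ℝ) (hΛ₁ : Λ₁ = (ρ₁ / ρ) ^ 2) (hΛ₂ : Λ₂ = (ρ₂ / ρ) ^ 2)
    (hΛ : Λ = (Λ₁ - Λ₂) ^ 2 + 1 - 2 * (Λ₁ + Λ₂))
    (l₁ l₂ : ℕ → ℝ) (hl₁0 : l₁ 0 = 1) (hl₂0 : l₂ 0 = 1)
    (hl₁ : ∀ n : ℕ, l₁ (n + 1) = 1 - Λ₂ / l₂ n)
    (hl₂ : ∀ n : ℕ, l₂ (n + 1) = 1 - Λ₁ / l₁ n)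
    (z1s z2s : ℕ → ℂ)
    (hz1s : ∀ n : ℕ, z1s n = ((1 - l₂ n : ℝ) : ℂ) * z₂ + ((l₂ n : ℝ) : ℂ) * z₁)
    (hz2s : ∀ n : ℕ, z2s n = ((1 - l₁ n : ℝ) : ℂ) * z₁ + ((l₁ n : ℝ) : ℂ) * z₂) :
    ∀ n : ℕ,
      (‖z2s n - z₂‖ = ρ * (1 - l₁ n) ∧ ρ * (1 - l₁ n) < ρ₂ ∧
        z2s n ∈ Metric.ball z₂ ρ₂) ∧
      (‖z1s n - z₁‖ = ρ * (1 - l₂ n) ∧ ρ * (1 - l₂ n) < ρ₁ ∧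
        z1s n ∈ Metric.ball z₁ ρ₁) := by
  have hρ0 : 0 < ρ := by linarith
  have key : ∀ n, (1 - ρ₂ / ρ < l₁ n ∧ l₁ n ≤ 1) ∧ (1 - ρ₁ / ρ < l₂ n ∧ l₂ n ≤ 1) := by
    intro n
    induction n with
    | zero =>
      rw [hl₁0, hl₂0]
      have h1 : 0 < ρ₁ / ρ := div_pos hρ₁ hρ0
      have h2 : 0 < ρ₂ / ρ := div_pos hρ₂ hρ0
      exact ⟨⟨by linarith, le_refl 1⟩, ⟨by linarith, le_refl 1⟩⟩
    | succ n ih =>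
      obtain ⟨⟨h1l, h1u⟩, ⟨h2l, h2u⟩⟩ := ih
      have hr1 : ρ₂ / ρ < 1 - ρ₁ / ρ := by
        rw [div_lt_iff₀ hρ0] at *
        have : (1 - ρ₁ / ρ) * ρ = ρ - ρ₁ := by field_simp
        rw [this]; linarith
      have hr2 : ρ₁ / ρ < 1 - ρ₂ / ρ := by
        rw [div_lt_iff₀ hρ0] at *
        have : (1 - ρ₂ / ρ) * ρ = ρ - ρ₂ := by field_simp
        rw [this]; linarith
      have h2p : 0 < l₂ n := by
        have : 0 < ρ₂ / ρ := div_pos hρ₂ hρ0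
        linarith
      have h1p : 0 < l₁ n := by
        have : 0 < ρ₁ / ρ := div_pos hρ₁ hρ0
        linarith
      have hl₁n : Λ₂ / l₂ n < ρ₂ / ρ := by
        rw [div_lt_iff₀ h2p, hΛ₂]
        have hb : ρ₂ / ρ < l₂ n := hr1.trans h2l
        nlinarith [div_pos hρ₂ hρ0]
      have hl₂n : Λ₁ / l₁ n < ρ₁ / ρ := by
        rw [div_lt_iff₀ h1p, hΛ₁]
        have hb : ρ₁ / ρ < l₁ n := hr2.trans h1l
        nlinarith [div_pos hρ₁ hρ0]
      have hΛ₂nn : 0 ≤ Λ₂ := by rw [hΛ₂]; positivity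
      have hΛ₁nn : 0 ≤ Λ₁ := by rw [hΛ₁]; positivity
      refine ⟨⟨?_, ?_⟩, ⟨?_, ?_⟩⟩
      · rw [hl₁]; linarith
      · rw [hl₁]
        have : 0 ≤ Λ₂ / l₂ n := div_nonneg hΛ₂nn h2p.le
        linarith
      · rw [hl₂]; linarith
      · rw [hl₂]
        have : 0 ≤ Λ₁ / l₁ n := div_nonneg hΛ₁nn h1p.le
        linarith
  intro n
  obtain ⟨⟨h1l, h1u⟩, ⟨h2l, h2u⟩⟩ := key n
  have e2 : z2s n - z₂ = ((1 - l₁ n : ℝ) : ℂ) * (z₁ - z₂) := by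
    rw [hz2s]; push_cast; ring
  have e1 : z1s n - z₁ = ((1 - l₂ n : ℝ) : ℂ) * (z₂ - z₁) := by
    rw [hz1s]; push_cast; ring
  have a2 : ‖z2s n - z₂‖ = ρ * (1 - l₁ n) := by
    rw [e2, norm_mul, Complex.norm_real, Real.norm_eq_abs, abs_of_nonneg (by linarith), ← hρ, mul_comm]
  have a1 : ‖z1s n - z₁‖ = ρ * (1 - l₂ n) := by
    have : ‖z₂ - z₁‖ = ρ := by
      rw [hρ, norm_sub_rev]
    rw [e1, norm_mul, Complex.norm_real, Real.norm_eq_abs, abs_of_nonneg (by linarith), this, mul_comm]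
  have lt2 : ρ * (1 - l₁ n) < ρ₂ := by
    have hd : ρ₂ / ρ * ρ = ρ₂ := div_mul_cancel₀ _ hρ0.ne'
    nlinarith
  have lt1 : ρ * (1 - l₂ n) < ρ₁ := by
    have hd : ρ₁ / ρ * ρ = ρ₁ := div_mul_cancel₀ _ hρ0.ne'
    nlinarith
  refine ⟨⟨a2, lt2, ?_⟩, ⟨a1, lt1, ?_⟩⟩
  · rw [Metric.mem_ball, Complex.dist_eq, a2]; exact lt2
  · rw [Metric.mem_ball, Complex.dist_eq, a1]; exact lt1
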